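/- Consider the ORFM. Let (x(t), z(t)) be any solution of the ORFM whose trajectory remains in the state space Ω, and define V(x,z) = Σ_{p,i} m^{pi} Σ_j |dx^{pi}_j/dt| + Σ_p |dz_p/dt| + |dz_E/dt|, where the time derivatives are evaluated as the components of the ORFM vector field at the point (x,z). Then for every choice of positive rates {λ^{pi}_j} and strictly increasing initiation functions G^{pi}, the function t ↦ V(x(t), z(t)) is non-increasing along the solution; i.e., V is a (non-strict) Lyapunov function for the ORFM. -/

import Mathlib

/-- State of an ORFM: codon occupancies `x p i j` (species `p`, strand `i`,
codon `j`, 1-based so that `j` ranges over `1,…,n p i`), translating-pool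
occupancies `z p`, and the empty-ribosome pool occupancy `zE`.
(Only the coordinates with `p < M`, `i < s p`, `1 ≤ j ≤ n p i` are meaningful.) -/
structure ORFMState where
  x : ℕ → ℕ → ℕ → ℝ
  z : ℕ → ℝ
  zE : ℝ

/-- The data of an Orthogonal Ribosomal Flow Model (ORFM): `M ≥ 1` ribosome
species, `s p` strands for species `p`, strand `(p,i)` of length `n p i ≥ 1`
with multiplicity `m p i ≥ 1` and positive rates `lam p i 0, …, lam p i (n p i)`,
an initiation function `G p i` (continuously differentiable on `[0,∞)`,
strictly increasing on `[0,∞)`, vanishing at `0`), and binding rates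
`kp p > 0`, `km p > 0`. -/
structure ORFM where
  M : ℕ
  s : ℕ → ℕ
  n : ℕ → ℕ → ℕ
  m : ℕ → ℕ → ℕ
  lam : ℕ → ℕ → ℕ → ℝ
  G : ℕ → ℕ → ℝ → ℝ
  kp : ℕ → ℝ
  km : ℕ → ℝ
  hM : 0 < M
  hn : ∀ p < M, ∀ i < s p, 1 ≤ n p i
  hm : ∀ p < M, ∀ i < s p, 1 ≤ m p i
  hlam : ∀ p < M, ∀ i < s p, ∀ j ≤ n p i, 0 < lam p i j
  hG_smooth : ∀ p < M, ∀ i < s p, ContDiffOn ℝ 1 (G p i) (Set.Ici 0)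
  hG_mono : ∀ p < M, ∀ i < s p, StrictMonoOn (G p i) (Set.Ici 0)
  hG_zero : ∀ p < M, ∀ i < s p, G p i 0 = 0
  hkp : ∀ p < M, 0 < kp p
  hkm : ∀ p < M, 0 < km p

/-- Ribosomal flux from codon `k` to codon `k+1` on strand `(p,i)`
(`k = 0` is initiation from the pool `z p`, `k = n p i` is termination). -/
noncomputable def ORFM.flow (S : ORFM) (st : ORFMState) (p i k : ℕ) : ℝ :=
  if k = 0 then S.lam p i 0 * S.G p i (st.z p) * (1 - st.x p i 1)
  else if k = S.n p i then S.lam p i k * st.x p i k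
  else S.lam p i k * st.x p i k * (1 - st.x p i (k + 1))

/-- Component of the ORFM vector field for codon `j` (1-based) of strand `(p,i)`:
`dx^{pi}_j/dt` = inflow minus outflow. -/
noncomputable def ORFM.fx (S : ORFM) (st : ORFMState) (p i j : ℕ) : ℝ :=
  S.flow st p i (j - 1) - S.flow st p i j

/-- Component of the ORFM vector field for the pool `z p`: `dz_p/dt`. -/
noncomputable def ORFM.fz (S : ORFM) (st : ORFMState) (p : ℕ) : ℝ :=
  S.kp p * st.zE - S.km p * st.z p
    + ∑ i ∈ Finset.range (S.s p), (S.m p i : ℝ) * S.flow st p i (S.n p i)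
    - ∑ i ∈ Finset.range (S.s p), (S.m p i : ℝ) * S.flow st p i 0

/-- Component of the ORFM vector field for the empty pool: `dz_E/dt`. -/
noncomputable def ORFM.fzE (S : ORFM) (st : ORFMState) : ℝ :=
  ∑ p ∈ Finset.range S.M, S.km p * st.z p - ∑ p ∈ Finset.range S.M, S.kp p * st.zE

/-- Membership in the state space `Ω`: all codon occupancies lie in `[0,1]`
and all pools are nonnegative. -/
def ORFM.inOmega (S : ORFM) (st : ORFMState) : Prop :=
  (∀ p < S.M, ∀ i < S.s p, ∀ j, 1 ≤ j → j ≤ S.n p i → st.x p i j ∈ Set.Icc (0:ℝ) 1)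
    ∧ 0 ≤ st.zE ∧ ∀ p < S.M, 0 ≤ st.z p

/-- The total ribosome count `N_r(x,z)`. -/
noncomputable def ORFM.NrOf (S : ORFM) (st : ORFMState) : ℝ :=
  st.zE + ∑ p ∈ Finset.range S.M, st.z p
    + ∑ p ∈ Finset.range S.M, ∑ i ∈ Finset.range (S.s p),
        (S.m p i : ℝ) * ∑ j ∈ Finset.Icc 1 (S.n p i), st.x p i j

/-- A steady state: every component of the ORFM vector field vanishes. -/
def ORFM.isSteady (S : ORFM) (st : ORFMState) : Prop :=
  (∀ p < S.M, ∀ i < S.s p, ∀ j, 1 ≤ j → j ≤ S.n p i → S.fx st p i j = 0)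
    ∧ (∀ p < S.M, S.fz st p = 0) ∧ S.fzE st = 0

/-- A (forward-time) solution of the ORFM: every meaningful coordinate is
differentiable in time with derivative given by the corresponding component
of the ORFM vector field, for all `t ≥ 0`. -/
def ORFM.isSolution (S : ORFM) (traj : ℝ → ORFMState) : Prop :=
  (∀ t, 0 ≤ t → ∀ p < S.M, ∀ i < S.s p, ∀ j, 1 ≤ j → j ≤ S.n p i →
      HasDerivAt (fun τ => (traj τ).x p i j) (S.fx (traj t) p i j) t)
    ∧ (∀ t, 0 ≤ t → ∀ p < S.M,
        HasDerivAt (fun τ => (traj τ).z p) (S.fz (traj t) p) t)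
    ∧ ∀ t, 0 ≤ t → HasDerivAt (fun τ => (traj τ).zE) (S.fzE (traj t)) t

/-- The robust Lyapunov function `V`: the multiplicity-weighted sum of the
absolute values of all the components of the ORFM vector field. -/
noncomputable def ORFM.V (S : ORFM) (st : ORFMState) : ℝ :=
  (∑ p ∈ Finset.range S.M, ∑ i ∈ Finset.range (S.s p),
      (S.m p i : ℝ) * ∑ j ∈ Finset.Icc 1 (S.n p i), |S.fx st p i j|)
    + ∑ p ∈ Finset.range S.M, |S.fz st p| + |S.fzE st|

open Finset Set

/-- the square-root smoothing of the absolute value -/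
lemma lyap_sqrt_pos {v ε : ℝ} (hε : 0 < ε) : 0 < Real.sqrt (v ^ 2 + ε) :=
  Real.sqrt_pos.2 (by positivity)

lemma lyap_abs_le_sqrt {v ε : ℝ} (hε : 0 ≤ ε) : |v| ≤ Real.sqrt (v ^ 2 + ε) := by
  rw [← Real.sqrt_sq_eq_abs]
  exact Real.sqrt_le_sqrt (by linarith)

lemma lyap_sqrt_le_abs_add {v ε : ℝ} (hε : 0 ≤ ε) :
    Real.sqrt (v ^ 2 + ε) ≤ |v| + Real.sqrt ε := by
  have h1 : Real.sqrt ε ^ 2 = ε := Real.sq_sqrt hε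
  have h2 : (0:ℝ) ≤ |v| + Real.sqrt ε := by positivity
  rw [show |v| + Real.sqrt ε = Real.sqrt ((|v| + Real.sqrt ε) ^ 2) from (Real.sqrt_sq h2).symm]
  apply Real.sqrt_le_sqrt
  have := abs_nonneg v
  have := Real.sqrt_nonneg ε
  nlinarith [sq_abs v]

lemma lyap_theta_abs_le {v ε : ℝ} (hε : 0 < ε) : |v / Real.sqrt (v ^ 2 + ε)| ≤ 1 := by
  rw [abs_div, abs_of_pos (lyap_sqrt_pos hε), div_le_one (lyap_sqrt_pos hε)]
  exact lyap_abs_le_sqrt hε.le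

lemma lyap_theta_mul_ge {v ε : ℝ} (hε : 0 < ε) :
    |v| - Real.sqrt ε ≤ v / Real.sqrt (v ^ 2 + ε) * v := by
  set r := Real.sqrt (v ^ 2 + ε) with hr
  have hrpos : 0 < r := lyap_sqrt_pos hε
  have hr2 : r ^ 2 = v ^ 2 + ε := Real.sq_sqrt (by positivity)
  have hrv : |v| ≤ r := lyap_abs_le_sqrt hε.le
  have hre : Real.sqrt ε ≤ r := by
    rw [hr]; exact Real.sqrt_le_sqrt (by nlinarith [sq_nonneg v])
  have hsε : 0 ≤ Real.sqrt ε := Real.sqrt_nonneg ε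
  have hεs : Real.sqrt ε ^ 2 = ε := Real.sq_sqrt hε.le
  rw [div_mul_eq_mul_div, ← sq, le_div_iff₀ hrpos]
  nlinarith [mul_nonneg (sub_nonneg.2 hrv) (sub_nonneg.2 hre), sq_abs v,
    mul_le_mul_of_nonneg_right hrv hsε, mul_le_mul_of_nonneg_right hre hsε]

/-- derivative of the smoothed absolute value along a differentiable curve -/
lemma lyap_hasDerivAt_sqrt_sq {u : ℝ → ℝ} {u' x ε : ℝ} (hε : 0 < ε)
    (hu : HasDerivAt u u' x) :
    HasDerivAt (fun t => Real.sqrt (u t ^ 2 + ε))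
      (u x / Real.sqrt (u x ^ 2 + ε) * u') x := by
  have h1 : HasDerivAt (fun t => u t ^ 2 + ε) (2 * u x * u') x := by
    simpa [mul_comm, mul_assoc] using ((hu.pow 2).add_const ε)
  have hne : u x ^ 2 + ε ≠ 0 := by positivity
  have h2 := (Real.hasDerivAt_sqrt hne).comp x h1
  have hrne : Real.sqrt (u x ^ 2 + ε) ≠ 0 := ne_of_gt (lyap_sqrt_pos hε)
  exact h2.congr_deriv (by field_simp)

/-- the elementary per-edge estimate -/
lemma lyap_edge_le {α θc θd y e : ℝ} (hα : 0 ≤ α) (hc : |θc| ≤ 1)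
    (hd : |y| - e ≤ θd * y) :
    α * ((θc - θd) * y) ≤ α * e := by
  apply mul_le_mul_of_nonneg_left _ hα
  have h1 : θc * y ≤ |y| := by
    calc θc * y ≤ |θc * y| := le_abs_self _
    _ = |θc| * |y| := abs_mul _ _
    _ ≤ 1 * |y| := mul_le_mul_of_nonneg_right hc (abs_nonneg y)
    _ = |y| := one_mul _
  have : (θc - θd) * y = θc * y - θd * y := by ring
  rw [this]
  linarith

/-- Abel summation for the telescoping sums appearing in `V`. -/
lemma lyap_abel_succ (n : ℕ) (θ F : ℕ → ℝ) :
    ∑ j ∈ Finset.Icc 1 (n + 1), θ j * (F (j - 1) - F j)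
      = θ 1 * F 0 - θ (n + 1) * F (n + 1)
        + ∑ k ∈ Finset.Icc 1 n, (θ (k + 1) - θ k) * F k := by
  induction n with
  | zero => simp [Finset.Icc_self]; ring
  | succ n ih =>
    rw [← Finset.insert_Icc_right_eq_Icc_add_one (by omega : 1 ≤ n + 1 + 1),
      Finset.sum_insert (by simp), ih,
      ← Finset.insert_Icc_right_eq_Icc_add_one (by omega : 1 ≤ n + 1),
      Finset.sum_insert (by simp)]
    simp only [Nat.add_sub_cancel]
    ring

lemma lyap_abel {n : ℕ} (hn : 1 ≤ n) (θ F : ℕ → ℝ) :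
    ∑ j ∈ Finset.Icc 1 n, θ j * (F (j - 1) - F j)
      = θ 1 * F 0 - θ n * F n
        + ∑ k ∈ Finset.Icc 1 (n - 1), (θ (k + 1) - θ k) * F k := by
  obtain ⟨m, rfl⟩ : ∃ m, n = m + 1 := ⟨n - 1, by omega⟩
  simpa using lyap_abel_succ m θ F

/-- a monotone function has nonnegative (one-sided) derivative -/
lemma lyap_derivWithin_nonneg {f : ℝ → ℝ} {z : ℝ}
    (hm : MonotoneOn f (Set.Ici 0)) (hz : 0 ≤ z)
    (hd : DifferentiableWithinAt ℝ f (Set.Ici 0) z) :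
    0 ≤ derivWithin f (Set.Ici 0) z := by
  have h := hd.hasDerivWithinAt
  rw [hasDerivWithinAt_iff_tendsto_slope] at h
  have hsub : Set.Ioi z ⊆ Set.Ici 0 \ {z} := fun y hy =>
    ⟨le_trans hz (le_of_lt hy), by simp [ne_of_gt (Set.mem_Ioi.1 hy)]⟩
  have hne : (nhdsWithin z (Set.Ici 0 \ {z})).NeBot :=
    (nhdsGT_neBot z).mono (nhdsWithin_mono z hsub)
  refine ge_of_tendsto h ?_
  filter_upwards [self_mem_nhdsWithin] with y hy
  obtain ⟨hy0, hyne⟩ := hy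
  have hyne' : y ≠ z := by simpa using hyne
  rw [slope_def_field]
  rcases lt_or_gt_of_ne hyne' with hlt | hgt
  · apply div_nonneg_of_nonpos
    · exact sub_nonpos.2 (hm hy0 (Set.mem_Ici.2 hz) hlt.le)
    · linarith
  · apply div_nonneg
    · exact sub_nonneg.2 (hm (Set.mem_Ici.2 hz) hy0 hgt.le)
    · linarith

/-- The formal time-derivative of the flux `ORFM.flow` along a trajectory,
expressed as a function of the instantaneous state. -/
noncomputable def lyapPhiD (S : ORFM) (st : ORFMState) (p i k : ℕ) : ℝ :=
  if k = 0 then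
    S.lam p i 0 * (derivWithin (S.G p i) (Set.Ici 0) (st.z p) * S.fz st p * (1 - st.x p i 1)
      - S.G p i (st.z p) * S.fx st p i 1)
  else if k = S.n p i then S.lam p i k * S.fx st p i k
  else S.lam p i k * (S.fx st p i k * (1 - st.x p i (k + 1))
    - st.x p i k * S.fx st p i (k + 1))

section Calculus

variable {S : ORFM} {traj : ℝ → ORFMState}

lemma lyap_hasDerivAt_G (hsol : S.isSolution traj) (hΩ : ∀ t, 0 ≤ t → S.inOmega (traj t))
    {t : ℝ} (ht : 0 < t) {p i : ℕ} (hp : p < S.M) (hi : i < S.s p) :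
    HasDerivAt (fun τ => S.G p i ((traj τ).z p))
      (derivWithin (S.G p i) (Set.Ici 0) ((traj t).z p) * S.fz (traj t) p) t := by
  have hz : HasDerivAt (fun τ => (traj τ).z p) (S.fz (traj t) p) t := hsol.2.1 t ht.le p hp
  have hmem : (traj t).z p ∈ Set.Ici (0:ℝ) := Set.mem_Ici.2 ((hΩ t ht.le).2.2 p hp)
  have hG : HasDerivWithinAt (S.G p i)
      (derivWithin (S.G p i) (Set.Ici 0) ((traj t).z p)) (Set.Ici 0) ((traj t).z p) :=
    (((S.hG_smooth p hp i hi).differentiableOn one_ne_zero) _ hmem).hasDerivWithinAt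
  have hmaps : Set.MapsTo (fun τ => (traj τ).z p) (Set.Ioi 0) (Set.Ici 0) :=
    fun τ hτ => Set.mem_Ici.2 ((hΩ τ (le_of_lt hτ)).2.2 p hp)
  exact (hG.comp t (hz.hasDerivWithinAt) hmaps).hasDerivAt (Ioi_mem_nhds ht)

lemma lyap_hasDerivAt_flow (hsol : S.isSolution traj) (hΩ : ∀ t, 0 ≤ t → S.inOmega (traj t))
    {t : ℝ} (ht : 0 < t) {p i k : ℕ} (hp : p < S.M) (hi : i < S.s p) (hk : k ≤ S.n p i) :
    HasDerivAt (fun τ => S.flow (traj τ) p i k) (lyapPhiD S (traj t) p i k) t := by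
  have hn1 : 1 ≤ S.n p i := S.hn p hp i hi
  have hX : ∀ j, 1 ≤ j → j ≤ S.n p i →
      HasDerivAt (fun τ => (traj τ).x p i j) (S.fx (traj t) p i j) t :=
    fun j h1 h2 => hsol.1 t ht.le p hp i hi j h1 h2
  by_cases hk0 : k = 0
  · subst hk0
    have h1 : HasDerivAt (fun τ => S.lam p i 0 * S.G p i ((traj τ).z p))
        (S.lam p i 0 * (derivWithin (S.G p i) (Set.Ici 0) ((traj t).z p) * S.fz (traj t) p)) t :=
      (lyap_hasDerivAt_G hsol hΩ ht hp hi).const_mul _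
    have h2 : HasDerivAt (fun τ => 1 - (traj τ).x p i 1) (-(S.fx (traj t) p i 1)) t :=
      (hX 1 le_rfl hn1).const_sub 1
    have h := h1.fun_mul h2
    simp only [ORFM.flow, lyapPhiD, reduceIte]
    exact h.congr_deriv (by ring)
  · by_cases hkn : k = S.n p i
    · have h := (hX k (by omega) hk).const_mul (S.lam p i k)
      simp only [ORFM.flow, lyapPhiD, if_neg hk0, if_pos hkn]
      exact h
    · have h1 : HasDerivAt (fun τ => S.lam p i k * (traj τ).x p i k)
          (S.lam p i k * S.fx (traj t) p i k) t := (hX k (by omega) hk).const_mul _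
      have h2 : HasDerivAt (fun τ => 1 - (traj τ).x p i (k + 1))
          (-(S.fx (traj t) p i (k + 1))) t :=
        (hX (k + 1) (by omega) (by omega)).const_sub 1
      have h := h1.fun_mul h2
      simp only [ORFM.flow, lyapPhiD, if_neg hk0, if_neg hkn]
      exact h.congr_deriv (by ring)

lemma lyap_hasDerivAt_fx (hsol : S.isSolution traj) (hΩ : ∀ t, 0 ≤ t → S.inOmega (traj t))
    {t : ℝ} (ht : 0 < t) {p i j : ℕ} (hp : p < S.M) (hi : i < S.s p)
    (hj1 : 1 ≤ j) (hj2 : j ≤ S.n p i) :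
    HasDerivAt (fun τ => S.fx (traj τ) p i j)
      (lyapPhiD S (traj t) p i (j - 1) - lyapPhiD S (traj t) p i j) t := by
  simp only [ORFM.fx]
  exact (lyap_hasDerivAt_flow hsol hΩ ht hp hi ((Nat.sub_le j 1).trans hj2)).sub
    (lyap_hasDerivAt_flow hsol hΩ ht hp hi hj2)

lemma lyap_hasDerivAt_fz (hsol : S.isSolution traj) (hΩ : ∀ t, 0 ≤ t → S.inOmega (traj t))
    {t : ℝ} (ht : 0 < t) {p : ℕ} (hp : p < S.M) :
    HasDerivAt (fun τ => S.fz (traj τ) p)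
      (S.kp p * S.fzE (traj t) - S.km p * S.fz (traj t) p
        + ∑ i ∈ Finset.range (S.s p), (S.m p i : ℝ) * lyapPhiD S (traj t) p i (S.n p i)
        - ∑ i ∈ Finset.range (S.s p), (S.m p i : ℝ) * lyapPhiD S (traj t) p i 0) t := by
  simp only [ORFM.fz]
  exact ((((hsol.2.2 t ht.le).const_mul (S.kp p)).fun_sub
      ((hsol.2.1 t ht.le p hp).const_mul (S.km p))).fun_add
    (HasDerivAt.fun_sum fun i hi =>
      (lyap_hasDerivAt_flow hsol hΩ ht hp (Finset.mem_range.1 hi) le_rfl).const_mul _)).fun_sub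
    (HasDerivAt.fun_sum fun i hi =>
      (lyap_hasDerivAt_flow hsol hΩ ht hp (Finset.mem_range.1 hi) (Nat.zero_le _)).const_mul _)

lemma lyap_hasDerivAt_fzE (hsol : S.isSolution traj)
    {t : ℝ} (ht : 0 < t) :
    HasDerivAt (fun τ => S.fzE (traj τ))
      (∑ p ∈ Finset.range S.M, S.km p * S.fz (traj t) p
        - ∑ p ∈ Finset.range S.M, S.kp p * S.fzE (traj t)) t := by
  simp only [ORFM.fzE]
  exact (HasDerivAt.fun_sum fun p hp =>
      (hsol.2.1 t ht.le p (Finset.mem_range.1 hp)).const_mul _).fun_sub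
    (HasDerivAt.fun_sum fun p hp => (hsol.2.2 t ht.le).const_mul _)

end Calculus

noncomputable def lyapTheta (ε v : ℝ) : ℝ := v / Real.sqrt (v ^ 2 + ε)

/-- The value of the time-derivative of the smoothed Lyapunov function,
as a function of the instantaneous state. -/
noncomputable def lyapD (S : ORFM) (ε : ℝ) (st : ORFMState) : ℝ :=
  (∑ p ∈ Finset.range S.M, ∑ i ∈ Finset.range (S.s p), (S.m p i : ℝ) *
      ∑ j ∈ Finset.Icc 1 (S.n p i),
        lyapTheta ε (S.fx st p i j) * (lyapPhiD S st p i (j - 1) - lyapPhiD S st p i j))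
  + ∑ p ∈ Finset.range S.M, lyapTheta ε (S.fz st p) *
      (S.kp p * S.fzE st - S.km p * S.fz st p
        + ∑ i ∈ Finset.range (S.s p), (S.m p i : ℝ) * lyapPhiD S st p i (S.n p i)
        - ∑ i ∈ Finset.range (S.s p), (S.m p i : ℝ) * lyapPhiD S st p i 0)
  + lyapTheta ε (S.fzE st) *
      (∑ p ∈ Finset.range S.M, S.km p * S.fz st p
        - ∑ p ∈ Finset.range S.M, S.kp p * S.fzE st)

/-- The coefficient controlling the smoothing error. -/
noncomputable def lyapC (S : ORFM) (st : ORFMState) : ℝ :=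
  ∑ p ∈ Finset.range S.M,
    ((∑ i ∈ Finset.range (S.s p), (S.m p i : ℝ) *
        (S.lam p i 0 * (derivWithin (S.G p i) (Set.Ici 0) (st.z p) + S.G p i (st.z p))
          + S.lam p i (S.n p i)
          + ∑ k ∈ Finset.Icc 1 (S.n p i - 1), 2 * S.lam p i k))
      + (S.kp p + S.km p))

/-- The smoothed Lyapunov function. -/
noncomputable def lyapPhi (S : ORFM) (ε : ℝ) (st : ORFMState) : ℝ :=
  (∑ p ∈ Finset.range S.M, ∑ i ∈ Finset.range (S.s p), (S.m p i : ℝ) *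
      ∑ j ∈ Finset.Icc 1 (S.n p i), Real.sqrt (S.fx st p i j ^ 2 + ε))
  + ∑ p ∈ Finset.range S.M, Real.sqrt (S.fz st p ^ 2 + ε)
  + Real.sqrt (S.fzE st ^ 2 + ε)

section Continuity

variable {S : ORFM} {traj : ℝ → ORFMState}

lemma lyap_cont_x (hsol : S.isSolution traj) {p i j : ℕ} (hp : p < S.M) (hi : i < S.s p)
    (hj1 : 1 ≤ j) (hj2 : j ≤ S.n p i) :
    ContinuousOn (fun τ => (traj τ).x p i j) (Set.Ici 0) :=
  fun t ht => (hsol.1 t ht p hp i hi j hj1 hj2).continuousAt.continuousWithinAt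

lemma lyap_cont_z (hsol : S.isSolution traj) {p : ℕ} (hp : p < S.M) :
    ContinuousOn (fun τ => (traj τ).z p) (Set.Ici 0) :=
  fun t ht => (hsol.2.1 t ht p hp).continuousAt.continuousWithinAt

lemma lyap_cont_zE (hsol : S.isSolution traj) :
    ContinuousOn (fun τ => (traj τ).zE) (Set.Ici 0) :=
  fun t ht => (hsol.2.2 t ht).continuousAt.continuousWithinAt

lemma lyap_maps (hΩ : ∀ t, 0 ≤ t → S.inOmega (traj t)) {p : ℕ} (hp : p < S.M) :
    Set.MapsTo (fun τ => (traj τ).z p) (Set.Ici 0) (Set.Ici 0) :=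
  fun τ hτ => Set.mem_Ici.2 ((hΩ τ hτ).2.2 p hp)

lemma lyap_cont_G (hsol : S.isSolution traj) (hΩ : ∀ t, 0 ≤ t → S.inOmega (traj t))
    {p i : ℕ} (hp : p < S.M) (hi : i < S.s p) :
    ContinuousOn (fun τ => S.G p i ((traj τ).z p)) (Set.Ici 0) :=
  ((S.hG_smooth p hp i hi).continuousOn).comp (lyap_cont_z hsol hp) (lyap_maps hΩ hp)

lemma lyap_cont_L (hsol : S.isSolution traj) (hΩ : ∀ t, 0 ≤ t → S.inOmega (traj t))
    {p i : ℕ} (hp : p < S.M) (hi : i < S.s p) :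
    ContinuousOn (fun τ => derivWithin (S.G p i) (Set.Ici 0) ((traj τ).z p)) (Set.Ici 0) :=
  ((S.hG_smooth p hp i hi).continuousOn_derivWithin (uniqueDiffOn_Ici 0) le_rfl).comp
    (lyap_cont_z hsol hp) (lyap_maps hΩ hp)

lemma lyap_cont_flow (hsol : S.isSolution traj) (hΩ : ∀ t, 0 ≤ t → S.inOmega (traj t))
    {p i k : ℕ} (hp : p < S.M) (hi : i < S.s p) (hk : k ≤ S.n p i) :
    ContinuousOn (fun τ => S.flow (traj τ) p i k) (Set.Ici 0) := by
  have hn1 : 1 ≤ S.n p i := S.hn p hp i hi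
  by_cases hk0 : k = 0
  · subst hk0
    simp only [ORFM.flow, reduceIte]
    exact (continuousOn_const.mul (lyap_cont_G hsol hΩ hp hi)).mul
      (continuousOn_const.sub (lyap_cont_x hsol hp hi le_rfl hn1))
  · by_cases hkn : k = S.n p i
    · simp only [ORFM.flow, if_neg hk0, if_pos hkn]
      exact continuousOn_const.mul (lyap_cont_x hsol hp hi (by omega) hk)
    · simp only [ORFM.flow, if_neg hk0, if_neg hkn]
      exact (continuousOn_const.mul (lyap_cont_x hsol hp hi (by omega) hk)).mul
        (continuousOn_const.sub (lyap_cont_x hsol hp hi (by omega) (by omega)))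

lemma lyap_cont_fx (hsol : S.isSolution traj) (hΩ : ∀ t, 0 ≤ t → S.inOmega (traj t))
    {p i j : ℕ} (hp : p < S.M) (hi : i < S.s p) (hj2 : j ≤ S.n p i) :
    ContinuousOn (fun τ => S.fx (traj τ) p i j) (Set.Ici 0) := by
  simp only [ORFM.fx]
  exact (lyap_cont_flow hsol hΩ hp hi ((Nat.sub_le j 1).trans hj2)).sub
    (lyap_cont_flow hsol hΩ hp hi hj2)

lemma lyap_cont_fz (hsol : S.isSolution traj) (hΩ : ∀ t, 0 ≤ t → S.inOmega (traj t))
    {p : ℕ} (hp : p < S.M) :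
    ContinuousOn (fun τ => S.fz (traj τ) p) (Set.Ici 0) := by
  simp only [ORFM.fz]
  exact (((continuousOn_const.mul (lyap_cont_zE hsol)).sub
      (continuousOn_const.mul (lyap_cont_z hsol hp))).add
    (continuousOn_finset_sum _ fun i hi => continuousOn_const.mul
      (lyap_cont_flow hsol hΩ hp (Finset.mem_range.1 hi) le_rfl))).sub
    (continuousOn_finset_sum _ fun i hi => continuousOn_const.mul
      (lyap_cont_flow hsol hΩ hp (Finset.mem_range.1 hi) (Nat.zero_le _)))

lemma lyap_cont_fzE (hsol : S.isSolution traj) (hΩ : ∀ t, 0 ≤ t → S.inOmega (traj t)) :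
    ContinuousOn (fun τ => S.fzE (traj τ)) (Set.Ici 0) := by
  simp only [ORFM.fzE]
  exact (continuousOn_finset_sum _ fun p hp => continuousOn_const.mul
      (lyap_cont_z hsol (Finset.mem_range.1 hp))).sub
    (continuousOn_finset_sum _ fun p hp => continuousOn_const.mul (lyap_cont_zE hsol))

lemma lyap_cont_C (hsol : S.isSolution traj) (hΩ : ∀ t, 0 ≤ t → S.inOmega (traj t)) :
    ContinuousOn (fun τ => lyapC S (traj τ)) (Set.Ici 0) := by
  simp only [lyapC]
  apply continuousOn_finset_sum
  intro p hp
  apply ContinuousOn.add ?_ continuousOn_const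
  apply continuousOn_finset_sum
  intro i hi
  exact continuousOn_const.mul
    (((continuousOn_const.mul ((lyap_cont_L hsol hΩ (Finset.mem_range.1 hp)
            (Finset.mem_range.1 hi)).add
          (lyap_cont_G hsol hΩ (Finset.mem_range.1 hp) (Finset.mem_range.1 hi)))).add
        continuousOn_const).add continuousOn_const)

lemma lyap_cont_phi (hsol : S.isSolution traj) (hΩ : ∀ t, 0 ≤ t → S.inOmega (traj t))
    {ε : ℝ} :
    ContinuousOn (fun τ => lyapPhi S ε (traj τ)) (Set.Ici 0) := by
  simp only [lyapPhi]
  apply ContinuousOn.add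
  apply ContinuousOn.add
  · apply continuousOn_finset_sum; intro p hp
    apply continuousOn_finset_sum; intro i hi
    apply ContinuousOn.mul continuousOn_const
    apply continuousOn_finset_sum; intro j hj
    exact Real.continuous_sqrt.comp_continuousOn
      (((lyap_cont_fx hsol hΩ (Finset.mem_range.1 hp) (Finset.mem_range.1 hi)
          (Finset.mem_Icc.1 hj).2).pow 2).add continuousOn_const)
  · apply continuousOn_finset_sum; intro p hp
    exact Real.continuous_sqrt.comp_continuousOn
      (((lyap_cont_fz hsol hΩ (Finset.mem_range.1 hp)).pow 2).add continuousOn_const)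
  · exact Real.continuous_sqrt.comp_continuousOn
      (((lyap_cont_fzE hsol hΩ).pow 2).add continuousOn_const)

end Continuity

/-- The key estimate: the derivative of the smoothed Lyapunov function is
bounded by `√ε` times the smoothing coefficient, at any state in `Ω`. -/
lemma lyapD_le (S : ORFM) {st : ORFMState} (hst : S.inOmega st) {ε : ℝ} (hε : 0 < ε) :
    lyapD S ε st ≤ Real.sqrt ε * lyapC S st := by
  have hθ1 : ∀ v : ℝ, |lyapTheta ε v| ≤ 1 := fun v => lyap_theta_abs_le hε
  have hθ2 : ∀ v : ℝ, |v| - Real.sqrt ε ≤ lyapTheta ε v * v := fun v => lyap_theta_mul_ge hε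
  have hsε : 0 ≤ Real.sqrt ε := Real.sqrt_nonneg ε
  have hsplit : lyapD S ε st = ∑ p ∈ Finset.range S.M,
      ((∑ i ∈ Finset.range (S.s p), (S.m p i : ℝ) *
          ((lyapTheta ε (S.fx st p i 1) - lyapTheta ε (S.fz st p)) * lyapPhiD S st p i 0
            + (lyapTheta ε (S.fz st p) - lyapTheta ε (S.fx st p i (S.n p i)))
                * lyapPhiD S st p i (S.n p i)
            + ∑ k ∈ Finset.Icc 1 (S.n p i - 1),
                (lyapTheta ε (S.fx st p i (k + 1)) - lyapTheta ε (S.fx st p i k))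
                  * lyapPhiD S st p i k))
        + ((lyapTheta ε (S.fz st p) - lyapTheta ε (S.fzE st)) * (S.kp p * S.fzE st)
            + (lyapTheta ε (S.fzE st) - lyapTheta ε (S.fz st p)) * (S.km p * S.fz st p))) := by
    simp only [lyapD]
    rw [mul_sub, Finset.mul_sum, Finset.mul_sum, ← Finset.sum_sub_distrib,
      ← Finset.sum_add_distrib, ← Finset.sum_add_distrib]
    apply Finset.sum_congr rfl
    intro p hp
    have hp' : p < S.M := Finset.mem_range.1 hp
    have hA : ∑ i ∈ Finset.range (S.s p), (S.m p i : ℝ) *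
          ∑ j ∈ Finset.Icc 1 (S.n p i),
            lyapTheta ε (S.fx st p i j) * (lyapPhiD S st p i (j - 1) - lyapPhiD S st p i j)
        = ∑ i ∈ Finset.range (S.s p), (S.m p i : ℝ) *
          (lyapTheta ε (S.fx st p i 1) * lyapPhiD S st p i 0
            - lyapTheta ε (S.fx st p i (S.n p i)) * lyapPhiD S st p i (S.n p i)
            + ∑ k ∈ Finset.Icc 1 (S.n p i - 1),
                (lyapTheta ε (S.fx st p i (k + 1)) - lyapTheta ε (S.fx st p i k))
                  * lyapPhiD S st p i k) :=
      Finset.sum_congr rfl fun i hi => congrArg (fun w => (S.m p i : ℝ) * w)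
        (lyap_abel (S.hn p hp' i (Finset.mem_range.1 hi))
          (fun j => lyapTheta ε (S.fx st p i j)) (fun k => lyapPhiD S st p i k))
    have hB : lyapTheta ε (S.fz st p) *
          (S.kp p * S.fzE st - S.km p * S.fz st p
            + ∑ i ∈ Finset.range (S.s p), (S.m p i : ℝ) * lyapPhiD S st p i (S.n p i)
            - ∑ i ∈ Finset.range (S.s p), (S.m p i : ℝ) * lyapPhiD S st p i 0)
        = (lyapTheta ε (S.fz st p) * (S.kp p * S.fzE st)
            - lyapTheta ε (S.fz st p) * (S.km p * S.fz st p))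
          + ∑ i ∈ Finset.range (S.s p), (S.m p i : ℝ) *
              (lyapTheta ε (S.fz st p) * lyapPhiD S st p i (S.n p i)
                - lyapTheta ε (S.fz st p) * lyapPhiD S st p i 0) := by
      rw [show lyapTheta ε (S.fz st p) *
          (S.kp p * S.fzE st - S.km p * S.fz st p
            + ∑ i ∈ Finset.range (S.s p), (S.m p i : ℝ) * lyapPhiD S st p i (S.n p i)
            - ∑ i ∈ Finset.range (S.s p), (S.m p i : ℝ) * lyapPhiD S st p i 0)
        = (lyapTheta ε (S.fz st p) * (S.kp p * S.fzE st)
            - lyapTheta ε (S.fz st p) * (S.km p * S.fz st p))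
          + (lyapTheta ε (S.fz st p) *
              ∑ i ∈ Finset.range (S.s p), (S.m p i : ℝ) * lyapPhiD S st p i (S.n p i)
            - lyapTheta ε (S.fz st p) *
              ∑ i ∈ Finset.range (S.s p), (S.m p i : ℝ) * lyapPhiD S st p i 0) from by ring]
      congr 1
      rw [Finset.mul_sum, Finset.mul_sum, ← Finset.sum_sub_distrib]
      exact Finset.sum_congr rfl fun i hi => by ring
    rw [hA, hB]
    have hmerge : ∑ i ∈ Finset.range (S.s p), (S.m p i : ℝ) *
          ((lyapTheta ε (S.fx st p i 1) - lyapTheta ε (S.fz st p)) * lyapPhiD S st p i 0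
            + (lyapTheta ε (S.fz st p) - lyapTheta ε (S.fx st p i (S.n p i)))
                * lyapPhiD S st p i (S.n p i)
            + ∑ k ∈ Finset.Icc 1 (S.n p i - 1),
                (lyapTheta ε (S.fx st p i (k + 1)) - lyapTheta ε (S.fx st p i k))
                  * lyapPhiD S st p i k)
        = ∑ i ∈ Finset.range (S.s p), ((S.m p i : ℝ) *
            (lyapTheta ε (S.fx st p i 1) * lyapPhiD S st p i 0
              - lyapTheta ε (S.fx st p i (S.n p i)) * lyapPhiD S st p i (S.n p i)
              + ∑ k ∈ Finset.Icc 1 (S.n p i - 1),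
                  (lyapTheta ε (S.fx st p i (k + 1)) - lyapTheta ε (S.fx st p i k))
                    * lyapPhiD S st p i k)
          + (S.m p i : ℝ) *
              (lyapTheta ε (S.fz st p) * lyapPhiD S st p i (S.n p i)
                - lyapTheta ε (S.fz st p) * lyapPhiD S st p i 0)) :=
      Finset.sum_congr rfl fun i hi => by ring
    rw [hmerge, Finset.sum_add_distrib]
    ring
  rw [hsplit]
  have hfinal : ∑ p ∈ Finset.range S.M, Real.sqrt ε *
      ((∑ i ∈ Finset.range (S.s p), (S.m p i : ℝ) *
          (S.lam p i 0 * (derivWithin (S.G p i) (Set.Ici 0) (st.z p) + S.G p i (st.z p))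
            + S.lam p i (S.n p i)
            + ∑ k ∈ Finset.Icc 1 (S.n p i - 1), 2 * S.lam p i k))
        + (S.kp p + S.km p))
      = Real.sqrt ε * lyapC S st := by
    simp only [lyapC]
    rw [Finset.mul_sum]
  rw [← hfinal]
  apply Finset.sum_le_sum
  intro p hp
  have hp' : p < S.M := Finset.mem_range.1 hp
  have hpl : (lyapTheta ε (S.fz st p) - lyapTheta ε (S.fzE st)) * (S.kp p * S.fzE st)
        + (lyapTheta ε (S.fzE st) - lyapTheta ε (S.fz st p)) * (S.km p * S.fz st p)
      ≤ Real.sqrt ε * (S.kp p + S.km p) := by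
    have b1 : S.kp p * ((lyapTheta ε (S.fz st p) - lyapTheta ε (S.fzE st)) * S.fzE st)
        ≤ S.kp p * Real.sqrt ε := lyap_edge_le (S.hkp p hp').le (hθ1 _) (hθ2 _)
    have b2 : S.km p * ((lyapTheta ε (S.fzE st) - lyapTheta ε (S.fz st p)) * S.fz st p)
        ≤ S.km p * Real.sqrt ε := lyap_edge_le (S.hkm p hp').le (hθ1 _) (hθ2 _)
    calc (lyapTheta ε (S.fz st p) - lyapTheta ε (S.fzE st)) * (S.kp p * S.fzE st)
          + (lyapTheta ε (S.fzE st) - lyapTheta ε (S.fz st p)) * (S.km p * S.fz st p)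
        = S.kp p * ((lyapTheta ε (S.fz st p) - lyapTheta ε (S.fzE st)) * S.fzE st)
          + S.km p * ((lyapTheta ε (S.fzE st) - lyapTheta ε (S.fz st p)) * S.fz st p) := by
          ring
      _ ≤ S.kp p * Real.sqrt ε + S.km p * Real.sqrt ε := add_le_add b1 b2
      _ = Real.sqrt ε * (S.kp p + S.km p) := by ring
  have hbr : ∀ i ∈ Finset.range (S.s p), (S.m p i : ℝ) *
        ((lyapTheta ε (S.fx st p i 1) - lyapTheta ε (S.fz st p)) * lyapPhiD S st p i 0
          + (lyapTheta ε (S.fz st p) - lyapTheta ε (S.fx st p i (S.n p i)))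
              * lyapPhiD S st p i (S.n p i)
          + ∑ k ∈ Finset.Icc 1 (S.n p i - 1),
              (lyapTheta ε (S.fx st p i (k + 1)) - lyapTheta ε (S.fx st p i k))
                * lyapPhiD S st p i k)
      ≤ (S.m p i : ℝ) * (Real.sqrt ε *
          (S.lam p i 0 * (derivWithin (S.G p i) (Set.Ici 0) (st.z p) + S.G p i (st.z p))
            + S.lam p i (S.n p i)
            + ∑ k ∈ Finset.Icc 1 (S.n p i - 1), 2 * S.lam p i k)) := by
    intro i hi
    have hi' : i < S.s p := Finset.mem_range.1 hi
    have hn1 : 1 ≤ S.n p i := S.hn p hp' i hi'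
    have hx : ∀ j, 1 ≤ j → j ≤ S.n p i → st.x p i j ∈ Set.Icc (0:ℝ) 1 :=
      fun j h1 h2 => hst.1 p hp' i hi' j h1 h2
    have hz0 : 0 ≤ st.z p := hst.2.2 p hp'
    have hG0 : 0 ≤ S.G p i (st.z p) := by
      have h := ((S.hG_mono p hp' i hi').monotoneOn) (Set.mem_Ici.2 le_rfl)
        (Set.mem_Ici.2 hz0) hz0
      rwa [S.hG_zero p hp' i hi'] at h
    have hL0 : 0 ≤ derivWithin (S.G p i) (Set.Ici 0) (st.z p) :=
      lyap_derivWithin_nonneg ((S.hG_mono p hp' i hi').monotoneOn) hz0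
        (((S.hG_smooth p hp' i hi').differentiableOn one_ne_zero) _ (Set.mem_Ici.2 hz0))
    have hlamb : ∀ k, k ≤ S.n p i → 0 < S.lam p i k := fun k hk => S.hlam p hp' i hi' k hk
    refine mul_le_mul_of_nonneg_left ?_ (Nat.cast_nonneg _)
    have hΦ0 : lyapPhiD S st p i 0
        = S.lam p i 0 * (derivWithin (S.G p i) (Set.Ici 0) (st.z p) * S.fz st p
            * (1 - st.x p i 1) - S.G p i (st.z p) * S.fx st p i 1) := by
      simp [lyapPhiD]
    have hΦn : lyapPhiD S st p i (S.n p i)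
        = S.lam p i (S.n p i) * S.fx st p i (S.n p i) := by
      simp only [lyapPhiD, if_neg (by omega : S.n p i ≠ 0), if_true, reduceIte]
    have t1 : (lyapTheta ε (S.fx st p i 1) - lyapTheta ε (S.fz st p)) * lyapPhiD S st p i 0
        ≤ Real.sqrt ε * (S.lam p i 0 *
            (derivWithin (S.G p i) (Set.Ici 0) (st.z p) + S.G p i (st.z p))) := by
      rw [hΦ0, show (lyapTheta ε (S.fx st p i 1) - lyapTheta ε (S.fz st p)) *
          (S.lam p i 0 * (derivWithin (S.G p i) (Set.Ici 0) (st.z p) * S.fz st p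
            * (1 - st.x p i 1) - S.G p i (st.z p) * S.fx st p i 1))
        = S.lam p i 0 * derivWithin (S.G p i) (Set.Ici 0) (st.z p) * (1 - st.x p i 1) *
            ((lyapTheta ε (S.fx st p i 1) - lyapTheta ε (S.fz st p)) * S.fz st p)
          + S.lam p i 0 * S.G p i (st.z p) *
            ((lyapTheta ε (S.fz st p) - lyapTheta ε (S.fx st p i 1)) * S.fx st p i 1)
          from by ring]
      have hx1 := hx 1 le_rfl hn1
      have hα1 : 0 ≤ S.lam p i 0 * derivWithin (S.G p i) (Set.Ici 0) (st.z p)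
          * (1 - st.x p i 1) := by
        apply mul_nonneg (mul_nonneg (hlamb 0 (by omega)).le hL0)
        have := hx1.2; linarith
      have hα2 : 0 ≤ S.lam p i 0 * S.G p i (st.z p) :=
        mul_nonneg (hlamb 0 (by omega)).le hG0
      have b1 := lyap_edge_le hα1 (hθ1 (S.fx st p i 1)) (hθ2 (S.fz st p))
      have b2 := lyap_edge_le hα2 (hθ1 (S.fz st p)) (hθ2 (S.fx st p i 1))
      have b1' : S.lam p i 0 * derivWithin (S.G p i) (Set.Ici 0) (st.z p)
            * (1 - st.x p i 1) * Real.sqrt ε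
          ≤ S.lam p i 0 * derivWithin (S.G p i) (Set.Ici 0) (st.z p) * Real.sqrt ε := by
        nlinarith [mul_nonneg (mul_nonneg (mul_nonneg (hlamb 0 (by omega)).le hL0) hx1.1)
          hsε]
      calc _ ≤ S.lam p i 0 * derivWithin (S.G p i) (Set.Ici 0) (st.z p)
            * (1 - st.x p i 1) * Real.sqrt ε
          + S.lam p i 0 * S.G p i (st.z p) * Real.sqrt ε := add_le_add b1 b2
        _ ≤ S.lam p i 0 * derivWithin (S.G p i) (Set.Ici 0) (st.z p) * Real.sqrt ε
          + S.lam p i 0 * S.G p i (st.z p) * Real.sqrt ε := add_le_add b1' le_rfl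
        _ = Real.sqrt ε * (S.lam p i 0 *
            (derivWithin (S.G p i) (Set.Ici 0) (st.z p) + S.G p i (st.z p))) := by ring
    have t2 : (lyapTheta ε (S.fz st p) - lyapTheta ε (S.fx st p i (S.n p i)))
          * lyapPhiD S st p i (S.n p i)
        ≤ Real.sqrt ε * S.lam p i (S.n p i) := by
      rw [hΦn, show (lyapTheta ε (S.fz st p) - lyapTheta ε (S.fx st p i (S.n p i)))
          * (S.lam p i (S.n p i) * S.fx st p i (S.n p i))
        = S.lam p i (S.n p i) * ((lyapTheta ε (S.fz st p)
            - lyapTheta ε (S.fx st p i (S.n p i))) * S.fx st p i (S.n p i)) from by ring]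
      calc _ ≤ S.lam p i (S.n p i) * Real.sqrt ε :=
            lyap_edge_le (hlamb _ le_rfl).le (hθ1 _) (hθ2 _)
        _ = Real.sqrt ε * S.lam p i (S.n p i) := mul_comm _ _
    have t3 : ∑ k ∈ Finset.Icc 1 (S.n p i - 1),
          (lyapTheta ε (S.fx st p i (k + 1)) - lyapTheta ε (S.fx st p i k))
            * lyapPhiD S st p i k
        ≤ ∑ k ∈ Finset.Icc 1 (S.n p i - 1), Real.sqrt ε * (2 * S.lam p i k) := by
      apply Finset.sum_le_sum
      intro k hk
      obtain ⟨hk1, hk2⟩ := Finset.mem_Icc.1 hk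
      have hk0 : k ≠ 0 := by omega
      have hkn : k ≠ S.n p i := by omega
      have hkle : k ≤ S.n p i := by omega
      have hΦk : lyapPhiD S st p i k
          = S.lam p i k * (S.fx st p i k * (1 - st.x p i (k + 1))
              - st.x p i k * S.fx st p i (k + 1)) := by
        simp only [lyapPhiD, if_neg hk0, if_neg hkn]
      rw [hΦk, show (lyapTheta ε (S.fx st p i (k + 1)) - lyapTheta ε (S.fx st p i k))
          * (S.lam p i k * (S.fx st p i k * (1 - st.x p i (k + 1))
              - st.x p i k * S.fx st p i (k + 1)))
        = S.lam p i k * (1 - st.x p i (k + 1)) *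
            ((lyapTheta ε (S.fx st p i (k + 1)) - lyapTheta ε (S.fx st p i k))
              * S.fx st p i k)
          + S.lam p i k * st.x p i k *
            ((lyapTheta ε (S.fx st p i k) - lyapTheta ε (S.fx st p i (k + 1)))
              * S.fx st p i (k + 1)) from by ring]
      have hxk := hx k hk1 hkle
      have hxk1 := hx (k + 1) (by omega) (by omega)
      have hαa : 0 ≤ S.lam p i k * (1 - st.x p i (k + 1)) := by
        apply mul_nonneg (hlamb k hkle).le
        have := hxk1.2; linarith
      have hαb : 0 ≤ S.lam p i k * st.x p i k := mul_nonneg (hlamb k hkle).le hxk.1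
      have c1 := lyap_edge_le hαa (hθ1 (S.fx st p i (k + 1))) (hθ2 (S.fx st p i k))
      have c2 := lyap_edge_le hαb (hθ1 (S.fx st p i k)) (hθ2 (S.fx st p i (k + 1)))
      calc _ ≤ S.lam p i k * (1 - st.x p i (k + 1)) * Real.sqrt ε
            + S.lam p i k * st.x p i k * Real.sqrt ε := add_le_add c1 c2
        _ ≤ Real.sqrt ε * (2 * S.lam p i k) := by
            nlinarith [mul_nonneg (mul_nonneg (hlamb k hkle).le hsε)
                (by linarith [hxk.2] : (0:ℝ) ≤ 1 - st.x p i k),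
              mul_nonneg (mul_nonneg (hlamb k hkle).le hsε) hxk1.1]
    calc (lyapTheta ε (S.fx st p i 1) - lyapTheta ε (S.fz st p)) * lyapPhiD S st p i 0
          + (lyapTheta ε (S.fz st p) - lyapTheta ε (S.fx st p i (S.n p i)))
              * lyapPhiD S st p i (S.n p i)
          + ∑ k ∈ Finset.Icc 1 (S.n p i - 1),
              (lyapTheta ε (S.fx st p i (k + 1)) - lyapTheta ε (S.fx st p i k))
                * lyapPhiD S st p i k
        ≤ Real.sqrt ε * (S.lam p i 0 *
            (derivWithin (S.G p i) (Set.Ici 0) (st.z p) + S.G p i (st.z p)))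
          + Real.sqrt ε * S.lam p i (S.n p i)
          + ∑ k ∈ Finset.Icc 1 (S.n p i - 1), Real.sqrt ε * (2 * S.lam p i k) :=
          add_le_add (add_le_add t1 t2) t3
      _ = Real.sqrt ε * (S.lam p i 0 *
            (derivWithin (S.G p i) (Set.Ici 0) (st.z p) + S.G p i (st.z p))
          + S.lam p i (S.n p i)
          + ∑ k ∈ Finset.Icc 1 (S.n p i - 1), 2 * S.lam p i k) := by
          symm; rw [mul_add, mul_add, Finset.mul_sum]
  calc ∑ i ∈ Finset.range (S.s p), (S.m p i : ℝ) *
        ((lyapTheta ε (S.fx st p i 1) - lyapTheta ε (S.fz st p)) * lyapPhiD S st p i 0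
          + (lyapTheta ε (S.fz st p) - lyapTheta ε (S.fx st p i (S.n p i)))
              * lyapPhiD S st p i (S.n p i)
          + ∑ k ∈ Finset.Icc 1 (S.n p i - 1),
              (lyapTheta ε (S.fx st p i (k + 1)) - lyapTheta ε (S.fx st p i k))
                * lyapPhiD S st p i k)
        + ((lyapTheta ε (S.fz st p) - lyapTheta ε (S.fzE st)) * (S.kp p * S.fzE st)
            + (lyapTheta ε (S.fzE st) - lyapTheta ε (S.fz st p)) * (S.km p * S.fz st p))
      ≤ (∑ i ∈ Finset.range (S.s p), (S.m p i : ℝ) * (Real.sqrt ε *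
          (S.lam p i 0 * (derivWithin (S.G p i) (Set.Ici 0) (st.z p) + S.G p i (st.z p))
            + S.lam p i (S.n p i)
            + ∑ k ∈ Finset.Icc 1 (S.n p i - 1), 2 * S.lam p i k)))
        + Real.sqrt ε * (S.kp p + S.km p) :=
        add_le_add (Finset.sum_le_sum hbr) hpl
    _ = Real.sqrt ε *
        ((∑ i ∈ Finset.range (S.s p), (S.m p i : ℝ) *
            (S.lam p i 0 * (derivWithin (S.G p i) (Set.Ici 0) (st.z p) + S.G p i (st.z p))
              + S.lam p i (S.n p i)
              + ∑ k ∈ Finset.Icc 1 (S.n p i - 1), 2 * S.lam p i k))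
          + (S.kp p + S.km p)) := by
        symm; rw [mul_add, Finset.mul_sum]
        congr 1
        exact Finset.sum_congr rfl fun i _ => by ring

lemma lyap_hasDerivAt_phi {S : ORFM} {traj : ℝ → ORFMState}
    (hsol : S.isSolution traj) (hΩ : ∀ t, 0 ≤ t → S.inOmega (traj t))
    {ε : ℝ} (hε : 0 < ε) {t : ℝ} (ht : 0 < t) :
    HasDerivAt (fun τ => lyapPhi S ε (traj τ)) (lyapD S ε (traj t)) t := by
  simp only [lyapPhi, lyapD, lyapTheta]
  apply HasDerivAt.add
  apply HasDerivAt.add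
  · exact HasDerivAt.fun_sum fun p hp => HasDerivAt.fun_sum fun i hi =>
      ((HasDerivAt.fun_sum fun j hj => lyap_hasDerivAt_sqrt_sq hε
        (lyap_hasDerivAt_fx hsol hΩ ht (Finset.mem_range.1 hp) (Finset.mem_range.1 hi)
          (Finset.mem_Icc.1 hj).1 (Finset.mem_Icc.1 hj).2)).const_mul _)
  · exact HasDerivAt.fun_sum fun p hp => lyap_hasDerivAt_sqrt_sq hε
      (lyap_hasDerivAt_fz hsol hΩ ht (Finset.mem_range.1 hp))
  · exact lyap_hasDerivAt_sqrt_sq hε (lyap_hasDerivAt_fzE hsol ht)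

lemma lyapV_le_phi (S : ORFM) (st : ORFMState) {ε : ℝ} (hε : 0 < ε) :
    S.V st ≤ lyapPhi S ε st := by
  simp only [ORFM.V, lyapPhi]
  refine add_le_add (add_le_add ?_ ?_) (lyap_abs_le_sqrt hε.le)
  · exact Finset.sum_le_sum fun p _ => Finset.sum_le_sum fun i _ =>
      mul_le_mul_of_nonneg_left
        (Finset.sum_le_sum fun j _ => lyap_abs_le_sqrt hε.le) (Nat.cast_nonneg _)
  · exact Finset.sum_le_sum fun p _ => lyap_abs_le_sqrt hε.le

/-- total (weighted) number of coordinates -/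
noncomputable def lyapW (S : ORFM) : ℝ :=
  (∑ p ∈ Finset.range S.M, ∑ i ∈ Finset.range (S.s p), (S.m p i : ℝ) * (S.n p i : ℝ))
    + S.M + 1

lemma lyap_phi_le (S : ORFM) (st : ORFMState) {ε : ℝ} (hε : 0 < ε) :
    lyapPhi S ε st ≤ S.V st + Real.sqrt ε * lyapW S := by
  have h1 : ∀ v : ℝ, Real.sqrt (v ^ 2 + ε) ≤ |v| + Real.sqrt ε :=
    fun v => lyap_sqrt_le_abs_add hε.le
  have hx : ∑ p ∈ Finset.range S.M, ∑ i ∈ Finset.range (S.s p), (S.m p i : ℝ) *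
        ∑ j ∈ Finset.Icc 1 (S.n p i), Real.sqrt (S.fx st p i j ^ 2 + ε)
      ≤ (∑ p ∈ Finset.range S.M, ∑ i ∈ Finset.range (S.s p), (S.m p i : ℝ) *
          ∑ j ∈ Finset.Icc 1 (S.n p i), |S.fx st p i j|)
        + Real.sqrt ε * ∑ p ∈ Finset.range S.M, ∑ i ∈ Finset.range (S.s p),
            (S.m p i : ℝ) * (S.n p i : ℝ) := by
    have step : ∀ p ∈ Finset.range S.M, ∀ i ∈ Finset.range (S.s p),
        (S.m p i : ℝ) * ∑ j ∈ Finset.Icc 1 (S.n p i), Real.sqrt (S.fx st p i j ^ 2 + ε)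
          ≤ (S.m p i : ℝ) * ∑ j ∈ Finset.Icc 1 (S.n p i), |S.fx st p i j|
            + Real.sqrt ε * ((S.m p i : ℝ) * (S.n p i : ℝ)) := by
      intro p _ i _
      have h2 : ∑ j ∈ Finset.Icc 1 (S.n p i), Real.sqrt (S.fx st p i j ^ 2 + ε)
          ≤ ∑ j ∈ Finset.Icc 1 (S.n p i), (|S.fx st p i j| + Real.sqrt ε) :=
        Finset.sum_le_sum fun j _ => h1 _
      have h3 : ∑ j ∈ Finset.Icc 1 (S.n p i), (|S.fx st p i j| + Real.sqrt ε)
          = ∑ j ∈ Finset.Icc 1 (S.n p i), |S.fx st p i j| + (S.n p i : ℝ) * Real.sqrt ε := by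
        rw [Finset.sum_add_distrib, Finset.sum_const, Nat.card_Icc, Nat.add_sub_cancel,
          nsmul_eq_mul]
      calc (S.m p i : ℝ) * ∑ j ∈ Finset.Icc 1 (S.n p i), Real.sqrt (S.fx st p i j ^ 2 + ε)
          ≤ (S.m p i : ℝ) * (∑ j ∈ Finset.Icc 1 (S.n p i), |S.fx st p i j|
              + (S.n p i : ℝ) * Real.sqrt ε) := by
            rw [← h3]; exact mul_le_mul_of_nonneg_left h2 (Nat.cast_nonneg _)
        _ = (S.m p i : ℝ) * ∑ j ∈ Finset.Icc 1 (S.n p i), |S.fx st p i j|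
            + Real.sqrt ε * ((S.m p i : ℝ) * (S.n p i : ℝ)) := by ring
    calc ∑ p ∈ Finset.range S.M, ∑ i ∈ Finset.range (S.s p), (S.m p i : ℝ) *
          ∑ j ∈ Finset.Icc 1 (S.n p i), Real.sqrt (S.fx st p i j ^ 2 + ε)
        ≤ ∑ p ∈ Finset.range S.M, ∑ i ∈ Finset.range (S.s p),
            ((S.m p i : ℝ) * ∑ j ∈ Finset.Icc 1 (S.n p i), |S.fx st p i j|
              + Real.sqrt ε * ((S.m p i : ℝ) * (S.n p i : ℝ))) :=
          Finset.sum_le_sum fun p hp => Finset.sum_le_sum fun i hi => step p hp i hi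
      _ = (∑ p ∈ Finset.range S.M, ∑ i ∈ Finset.range (S.s p), (S.m p i : ℝ) *
            ∑ j ∈ Finset.Icc 1 (S.n p i), |S.fx st p i j|)
          + Real.sqrt ε * ∑ p ∈ Finset.range S.M, ∑ i ∈ Finset.range (S.s p),
              (S.m p i : ℝ) * (S.n p i : ℝ) := by
          simp only [Finset.sum_add_distrib]
          congr 1
          rw [Finset.mul_sum]
          exact Finset.sum_congr rfl fun p _ => by rw [Finset.mul_sum]
  have hz : ∑ p ∈ Finset.range S.M, Real.sqrt (S.fz st p ^ 2 + ε)
      ≤ ∑ p ∈ Finset.range S.M, |S.fz st p| + Real.sqrt ε * (S.M : ℝ) := by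
    calc ∑ p ∈ Finset.range S.M, Real.sqrt (S.fz st p ^ 2 + ε)
        ≤ ∑ p ∈ Finset.range S.M, (|S.fz st p| + Real.sqrt ε) :=
          Finset.sum_le_sum fun p _ => h1 _
      _ = ∑ p ∈ Finset.range S.M, |S.fz st p| + Real.sqrt ε * (S.M : ℝ) := by
          rw [Finset.sum_add_distrib, Finset.sum_const, Finset.card_range, nsmul_eq_mul]
          ring
  have hE : Real.sqrt (S.fzE st ^ 2 + ε) ≤ |S.fzE st| + Real.sqrt ε := h1 _
  simp only [lyapPhi, ORFM.V, lyapW]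
  have := add_le_add (add_le_add hx hz) hE
  calc (∑ p ∈ Finset.range S.M, ∑ i ∈ Finset.range (S.s p), (S.m p i : ℝ) *
        ∑ j ∈ Finset.Icc 1 (S.n p i), Real.sqrt (S.fx st p i j ^ 2 + ε))
      + ∑ p ∈ Finset.range S.M, Real.sqrt (S.fz st p ^ 2 + ε)
      + Real.sqrt (S.fzE st ^ 2 + ε)
      ≤ ((∑ p ∈ Finset.range S.M, ∑ i ∈ Finset.range (S.s p), (S.m p i : ℝ) *
            ∑ j ∈ Finset.Icc 1 (S.n p i), |S.fx st p i j|)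
          + Real.sqrt ε * ∑ p ∈ Finset.range S.M, ∑ i ∈ Finset.range (S.s p),
              (S.m p i : ℝ) * (S.n p i : ℝ))
        + (∑ p ∈ Finset.range S.M, |S.fz st p| + Real.sqrt ε * (S.M : ℝ))
        + (|S.fzE st| + Real.sqrt ε) := this
    _ = ((∑ p ∈ Finset.range S.M, ∑ i ∈ Finset.range (S.s p), (S.m p i : ℝ) *
            ∑ j ∈ Finset.Icc 1 (S.n p i), |S.fx st p i j|)
          + ∑ p ∈ Finset.range S.M, |S.fz st p| + |S.fzE st|)
        + Real.sqrt ε * ((∑ p ∈ Finset.range S.M, ∑ i ∈ Finset.range (S.s p),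
            (S.m p i : ℝ) * (S.n p i : ℝ)) + (S.M : ℝ) + 1) := by ring
/-- For every ORFM (i.e., every choice of positive rates and
strictly increasing initiation functions), along any solution whose trajectory
remains in the state space `Ω`, the function `t ↦ V(x(t),z(t))` is
non-increasing; that is, `V` is a (non-strict) Lyapunov function. -/
theorem orfm_V_is_lyapunov (S : ORFM) (traj : ℝ → ORFMState)
    (hsol : S.isSolution traj)
    (hΩ : ∀ t, 0 ≤ t → S.inOmega (traj t)) :
    ∀ t₁ t₂, 0 ≤ t₁ → t₁ ≤ t₂ → S.V (traj t₂) ≤ S.V (traj t₁) := by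
  intro t₁ t₂ ht₁ ht12
  have hsub : Set.Icc t₁ t₂ ⊆ Set.Ici (0:ℝ) := fun τ hτ => le_trans ht₁ hτ.1
  obtain ⟨K, hK⟩ := (isCompact_Icc : IsCompact (Set.Icc t₁ t₂)).exists_bound_of_continuousOn
    ((lyap_cont_C hsol hΩ).mono hsub)
  have hK0 : 0 ≤ K := le_trans (norm_nonneg _) (hK t₁ ⟨le_rfl, ht12⟩)
  have hCK : ∀ τ ∈ Set.Icc t₁ t₂, lyapC S (traj τ) ≤ K := fun τ hτ =>
    le_trans (le_abs_self _) (by simpa [Real.norm_eq_abs] using hK τ hτ)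
  have hW0 : 0 ≤ lyapW S := by
    simp only [lyapW]
    have : 0 ≤ ∑ p ∈ Finset.range S.M, ∑ i ∈ Finset.range (S.s p),
        (S.m p i : ℝ) * (S.n p i : ℝ) :=
      Finset.sum_nonneg fun p _ => Finset.sum_nonneg fun i _ =>
        mul_nonneg (Nat.cast_nonneg _) (Nat.cast_nonneg _)
    positivity
  set B := lyapW S + K * (t₂ - t₁) with hB
  have hB0 : 0 ≤ B := by
    have : 0 ≤ K * (t₂ - t₁) := mul_nonneg hK0 (by linarith)
    simp only [hB]; linarith
  have key : ∀ ε : ℝ, 0 < ε → S.V (traj t₂) ≤ S.V (traj t₁) + Real.sqrt ε * B := by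
    intro ε hε
    have hg : AntitoneOn (fun τ => lyapPhi S ε (traj τ) - Real.sqrt ε * K * τ)
        (Set.Icc t₁ t₂) := by
      have hid : ∀ τ : ℝ, HasDerivAt (fun y : ℝ => Real.sqrt ε * K * y)
          (Real.sqrt ε * K) τ := fun τ => by
        simpa using (hasDerivAt_id τ).const_mul (Real.sqrt ε * K)
      apply antitoneOn_of_deriv_nonpos (convex_Icc t₁ t₂)
      · exact ((lyap_cont_phi hsol hΩ).mono hsub).sub
          ((continuous_const.mul continuous_id).continuousOn)
      · intro τ hτ
        rw [interior_Icc] at hτ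
        have ht0 : 0 < τ := lt_of_le_of_lt ht₁ hτ.1
        exact ((lyap_hasDerivAt_phi hsol hΩ hε ht0).sub
          (hid τ)).differentiableAt.differentiableWithinAt
      · intro τ hτ
        rw [interior_Icc] at hτ
        have ht0 : 0 < τ := lt_of_le_of_lt ht₁ hτ.1
        have hd := (lyap_hasDerivAt_phi hsol hΩ hε ht0).fun_sub (hid τ)
        rw [hd.deriv]
        have h1 : lyapD S ε (traj τ) ≤ Real.sqrt ε * lyapC S (traj τ) :=
          lyapD_le S (hΩ τ ht0.le) hε
        have h2 : lyapC S (traj τ) ≤ K := hCK τ ⟨hτ.1.le, hτ.2.le⟩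
        have h3 := mul_le_mul_of_nonneg_left h2 (Real.sqrt_nonneg ε)
        linarith
    have hmono : lyapPhi S ε (traj t₂) - Real.sqrt ε * K * t₂
        ≤ lyapPhi S ε (traj t₁) - Real.sqrt ε * K * t₁ :=
      hg ⟨le_rfl, ht12⟩ ⟨ht12, le_rfl⟩ ht12
    have hφ2 : S.V (traj t₂) ≤ lyapPhi S ε (traj t₂) := lyapV_le_phi S (traj t₂) hε
    have hφ1 : lyapPhi S ε (traj t₁) ≤ S.V (traj t₁) + Real.sqrt ε * lyapW S :=
      lyap_phi_le S (traj t₁) hε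
    have hBexp : Real.sqrt ε * B
        = Real.sqrt ε * lyapW S + (Real.sqrt ε * K * t₂ - Real.sqrt ε * K * t₁) := by
      simp only [hB]; ring
    linarith
  refine le_of_forall_pos_le_add ?_
  intro δ hδ
  have hB1 : 0 < B + 1 := by linarith
  have hε : (0:ℝ) < (δ / (B + 1)) ^ 2 := by positivity
  have hs : Real.sqrt ((δ / (B + 1)) ^ 2) = δ / (B + 1) := Real.sqrt_sq (by positivity)
  have h := key _ hε
  rw [hs] at h
  have hfin : δ / (B + 1) * B ≤ δ := by
    rw [div_mul_eq_mul_div, div_le_iff₀ hB1]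
    nlinarith
  linarith
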